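/- Let ξ(x) = Σ_{p≥2} c_p² x^p with nonnegative coefficients, ξ ≠ x², q ∈ (0,1). With φ as in the 2-RSB analysis and w₁ = qξ(q)(ξ'(1)−ξ'(q))/(ξ'(q)(qξ'(q)−ξ(q))(1−q)) the smaller critical point, one has φ(w₁) < 0. Explicitly, φ(w₁) = (−4qξ(q) + 2q²ξ'(q))/ξ'(q) − q²·log(1 + (qξ'(q)−2ξ(q))/ξ(q)) < 0. -/

import Mathlib

lemma log_gt_two_mul_div {x : ℝ} (hx : 0 < x) :
    2 * x / (2 + x) < Real.log (1 + x) := by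
  have key : StrictMonoOn (fun y : ℝ => Real.log (1 + y) - 2 * y / (2 + y)) (Set.Ici 0) := by
    apply strictMonoOn_of_deriv_pos (convex_Ici 0)
    · apply ContinuousOn.sub
      · apply ContinuousOn.log (by fun_prop)
        intro y hy
        simp only [Set.mem_Ici] at hy; positivity
      · apply ContinuousOn.div (by fun_prop) (by fun_prop)
        intro y hy
        simp only [Set.mem_Ici] at hy; positivity
    · intro y hy
      rw [interior_Ici, Set.mem_Ioi] at hy
      have h1y : (0:ℝ) < 1 + y := by linarith
      have h2y : (0:ℝ) < 2 + y := by linarith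
      have h1 : HasDerivAt (fun y : ℝ => Real.log (1 + y)) (1 / (1 + y)) y := by
        have := (HasDerivAt.const_add 1 (hasDerivAt_id y)).log (ne_of_gt h1y)
        simpa using this
      have h2 : HasDerivAt (fun y : ℝ => 2 * y / (2 + y)) (4 / (2 + y) ^ 2) y := by
        have ha : HasDerivAt (fun y : ℝ => 2 * y) 2 y := by
          simpa using (hasDerivAt_id y).const_mul 2
        have hb : HasDerivAt (fun y : ℝ => 2 + y) 1 y := by
          simpa using HasDerivAt.const_add 2 (hasDerivAt_id y)
        have := ha.div hb (ne_of_gt h2y)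
        refine this.congr_deriv ?_
        rw [div_left_inj' (by positivity)]
        ring
      rw [show (fun y : ℝ => Real.log (1 + y) - 2 * y / (2 + y)) = (fun y => Real.log (1 + y)) - (fun y => 2 * y / (2 + y)) from rfl, (h1.sub h2).deriv]
      rw [sub_pos, div_lt_div_iff₀ (by positivity) h1y]
      nlinarith
  have h0 : (0:ℝ) ∈ Set.Ici (0:ℝ) := Set.self_mem_Ici
  have hxm : x ∈ Set.Ici (0:ℝ) := Set.mem_Ici.mpr hx.le
  have := key h0 hxm hx
  simp only [mul_zero, zero_div, add_zero, Real.log_one, sub_zero, zero_sub] at this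
  linarith [this]

theorem phi_at_w1_neg
    (c : ℕ → ℝ) (hc : ∀ p, 0 ≤ c p) (hc0 : c 0 = 0) (hc1 : c 1 = 0)
    (hsum : Summable (fun p : ℕ => (2 : ℝ) ^ p * c p))
    (hne : ∃ p : ℕ, 3 ≤ p ∧ 0 < c p)
    (xi xi' : ℝ → ℝ)
    (hxi : ∀ x : ℝ, xi x = ∑' p : ℕ, c p * x ^ p)
    (hxi' : ∀ x : ℝ, xi' x = ∑' p : ℕ, (p : ℝ) * c p * x ^ (p - 1))
    (q : ℝ) (hq : 0 < q) (hq1 : q < 1)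
    (phi : ℝ → ℝ)
    (hphi : ∀ w : ℝ, phi w =
      -((q * xi' q - xi q) * (1 - q) * w / (xi' 1 - xi' q))
        - q ^ 2 * Real.log (q * (xi' 1 - xi' q) / (w * xi' q * (1 - q)))
        + q ^ 2 - 2 * xi q * q / xi' q
        + xi q * q ^ 2 * (xi' 1 - xi' q) / (w * xi' q ^ 2 * (1 - q))) :
    phi (q * xi q * (xi' 1 - xi' q) / (xi' q * (q * xi' q - xi q) * (1 - q)))
      = (-4 * q * xi q + 2 * q ^ 2 * xi' q) / xi' q
        - q ^ 2 * Real.log (1 + (q * xi' q - 2 * xi q) / xi q) ∧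
    phi (q * xi q * (xi' 1 - xi' q) / (xi' q * (q * xi' q - xi q) * (1 - q))) < 0 := by
  obtain ⟨p₀, hp3, hp0⟩ := hne
  have hq1' : (0:ℝ) < 1 - q := by linarith
  -- Summability facts
  have hS1 : Summable (fun p : ℕ => c p * q ^ p) := by
    apply hsum.of_nonneg_of_le (fun p => mul_nonneg (hc p) (pow_nonneg hq.le p))
    intro p
    have h1 : q ^ p ≤ 1 := pow_le_one₀ hq.le hq1.le
    have h2 : (1:ℝ) ≤ 2 ^ p := one_le_pow₀ (by norm_num)
    nlinarith [hc p, pow_nonneg hq.le p]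
  have hS2 : ∀ x : ℝ, 0 ≤ x → x ≤ 1 →
      Summable (fun p : ℕ => (p : ℝ) * c p * x ^ (p - 1)) := by
    intro x hx0 hx1
    apply hsum.of_nonneg_of_le
      (fun p => mul_nonneg (mul_nonneg (Nat.cast_nonneg p) (hc p)) (pow_nonneg hx0 _))
    intro p
    have h1 : x ^ (p - 1) ≤ 1 := pow_le_one₀ hx0 hx1
    have h2 : (p:ℝ) ≤ 2 ^ p := by exact_mod_cast (Nat.lt_two_pow_self (n := p)).le
    nlinarith [hc p, pow_nonneg hx0 (p-1), mul_nonneg (Nat.cast_nonneg (α := ℝ) p) (hc p)]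
  have hS3 : Summable (fun p : ℕ => (p : ℝ) * c p * q ^ p) := by
    apply hsum.of_nonneg_of_le
      (fun p => mul_nonneg (mul_nonneg (Nat.cast_nonneg p) (hc p)) (pow_nonneg hq.le _))
    intro p
    have h1 : q ^ p ≤ 1 := pow_le_one₀ hq.le hq1.le
    have h2 : (p:ℝ) ≤ 2 ^ p := by exact_mod_cast (Nat.lt_two_pow_self (n := p)).le
    nlinarith [hc p, pow_nonneg hq.le p, mul_nonneg (Nat.cast_nonneg (α := ℝ) p) (hc p)]
  -- a := xi q, b := xi' q, e := xi' 1
  have hA : xi q = ∑' p : ℕ, c p * q ^ p := hxi q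
  have hB : xi' q = ∑' p : ℕ, (p : ℝ) * c p * q ^ (p - 1) := hxi' q
  have hE : xi' 1 = ∑' p : ℕ, (p : ℝ) * c p * (1:ℝ) ^ (p - 1) := hxi' 1
  -- positivity of a
  have hApos : 0 < xi q := by
    rw [hA]
    exact Summable.tsum_pos hS1 (fun p => mul_nonneg (hc p) (pow_nonneg hq.le p)) p₀
      (mul_pos hp0 (pow_pos hq p₀))
  -- positivity of b
  have hBpos : 0 < xi' q := by
    rw [hB]
    refine Summable.tsum_pos (hS2 q hq.le hq1.le)
      (fun p => mul_nonneg (mul_nonneg (Nat.cast_nonneg p) (hc p)) (pow_nonneg hq.le _)) p₀ ?_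
    have : (0:ℝ) < (p₀:ℝ) := by exact_mod_cast Nat.lt_of_lt_of_le (by norm_num) hp3
    exact mul_pos (mul_pos this hp0) (pow_pos hq _)
  -- q * xi' q as a tsum
  have hqB : q * xi' q = ∑' p : ℕ, (p : ℝ) * c p * q ^ p := by
    rw [hB, ← tsum_mul_left]
    congr 1; funext p
    cases p with
    | zero => simp
    | succ n =>
        simp only [Nat.succ_sub_one]
        rw [pow_succ]
        ring
  -- q * xi' q - 2 * xi q > 0
  have hgnn : ∀ p : ℕ, 0 ≤ ((p:ℝ) - 2) * c p * q ^ p := by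
    intro p
    match p with
    | 0 => simp [hc0]
    | 1 => simp [hc1]
    | (n+2) =>
        have h2 : (0:ℝ) ≤ ((n+2:ℕ):ℝ) - 2 := by push_cast; linarith [Nat.cast_nonneg (α := ℝ) n]
        exact mul_nonneg (mul_nonneg h2 (hc _)) (pow_nonneg hq.le _)
  have hSg : Summable (fun p : ℕ => ((p:ℝ) - 2) * c p * q ^ p) := by
    have := hS3.sub (hS1.mul_left 2)
    apply this.congr
    intro p; ring
  have hqB2A : q * xi' q - 2 * xi q = ∑' p : ℕ, ((p:ℝ) - 2) * c p * q ^ p := by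
    rw [hqB, hA, ← tsum_mul_left, ← Summable.tsum_sub hS3 (hS1.mul_left 2)]
    congr 1; funext p; ring
  have hx_pos : 0 < q * xi' q - 2 * xi q := by
    rw [hqB2A]
    refine Summable.tsum_pos hSg hgnn p₀ ?_
    have h2 : (0:ℝ) < (p₀:ℝ) - 2 := by
      have : (3:ℝ) ≤ (p₀:ℝ) := by exact_mod_cast hp3
      linarith
    exact mul_pos (mul_pos h2 hp0) (pow_pos hq _)
  -- xi' 1 - xi' q > 0
  have hDpos : 0 < xi' 1 - xi' q := by
    rw [hE, hB, ← Summable.tsum_sub (hS2 1 zero_le_one le_rfl) (hS2 q hq.le hq1.le)]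
    refine Summable.tsum_pos ((hS2 1 zero_le_one le_rfl).sub (hS2 q hq.le hq1.le)) ?_ p₀ ?_
    · intro p
      have h1 : q ^ (p - 1) ≤ 1 := pow_le_one₀ hq.le hq1.le
      have := mul_nonneg (Nat.cast_nonneg (α := ℝ) p) (hc p)
      simp only [one_pow]
      nlinarith
    · have hp₀pos : (0:ℝ) < (p₀:ℝ) := by exact_mod_cast Nat.lt_of_lt_of_le (by norm_num) hp3
      have hlt : q ^ (p₀ - 1) < 1 := pow_lt_one₀ hq.le hq1 (by omega)
      simp only [one_pow]
      nlinarith [mul_pos (mul_pos hp₀pos hp0) (sub_pos.mpr hlt)]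
  -- abbreviations and nonzero facts
  set a := xi q with ha_def
  set b := xi' q with hb_def
  set e := xi' 1 with he_def
  have hqBA : 0 < q * b - a := by linarith
  have hane : a ≠ 0 := ne_of_gt hApos
  have hbne : b ≠ 0 := ne_of_gt hBpos
  have hDne : e - b ≠ 0 := ne_of_gt hDpos
  have hqBAne : q * b - a ≠ 0 := ne_of_gt hqBA
  have h1qne : (1:ℝ) - q ≠ 0 := ne_of_gt hq1'
  have hqne : q ≠ 0 := ne_of_gt hq
  set w := q * a * (e - b) / (b * (q * b - a) * (1 - q)) with hw_def
  have hwpos : 0 < w := by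
    apply div_pos
    · exact mul_pos (mul_pos hq hApos) hDpos
    · exact mul_pos (mul_pos hBpos hqBA) hq1'
  have hwne : w ≠ 0 := ne_of_gt hwpos
  -- the log argument
  have harg : q * (e - b) / (w * b * (1 - q)) = 1 + (q * b - 2 * a) / a := by
    rw [hw_def]
    field_simp
    ring
  have hkey : phi w = (-4 * q * a + 2 * q ^ 2 * b) / b
      - q ^ 2 * Real.log (1 + (q * b - 2 * a) / a) := by
    rw [hphi, harg, hw_def]
    field_simp
    ring
  refine ⟨hkey, ?_⟩
  rw [hkey]
  set x := (q * b - 2 * a) / a with hx_def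
  have hxpos : 0 < x := div_pos hx_pos hApos
  have hlog := log_gt_two_mul_div hxpos
  have h2x : (0:ℝ) < 2 + x := by linarith
  have heq : (-4 * q * a + 2 * q ^ 2 * b) / b = q ^ 2 * (2 * x / (2 + x)) := by
    have h2xeq : 2 + x = q * b / a := by
      rw [hx_def]; field_simp; ring
    rw [h2xeq, hx_def]
    field_simp
    ring
  rw [heq]
  have := mul_lt_mul_of_pos_left hlog (pow_pos hq 2)
  linarith
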